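/- Let τ > 0, ħ > 0, ξ ∈ ℝ and C ∈ ℂ, and define Φ : ℝ → ℂ by Φ(x) = C * (1 − τ*x + τ²*x²)^{−1/2} * exp(i * (2*ξ/(τ*ħ*√3)) * (arctan((2*τ*x − 1)/√3) + π/6)). With (p̂ f)(x) = −i*ħ*√(1 − τ*x + τ²*x²) * (d/dx)(fun y => √(1 − τ*y + τ²*y²) * f(y))(x), the function Φ satisfies the second-order eigenvalue equation (p̂ (p̂ Φ))(x) = ξ² * Φ(x) for every real x; hence for any mass m ≠ 0 and potential V : ℝ → ℂ, (1/(2m)) * (p̂ (p̂ Φ))(x) + V(x) * Φ(x) = (ξ²/(2m) + V(x)) * Φ(x). -/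

import Mathlib

/-- The Hermitian position-deformed momentum operator
`(p̂ f)(x) = -i ħ √(w x) (√w · f)'(x)` with `w x = 1 - τ x + τ² x²`. -/
noncomputable def hermitianDeformedMomentum (τ hbar : ℝ) (f : ℝ → ℂ) (x : ℝ) : ℂ :=
  -Complex.I * (hbar : ℂ) * (Real.sqrt (1 - τ * x + τ ^ 2 * x ^ 2) : ℂ) *
    deriv (fun y => (Real.sqrt (1 - τ * y + τ ^ 2 * y ^ 2) : ℂ) * f y) x

/-- The deformed plane wave `Φ_ξ`. -/
noncomputable def deformedPlaneWave (τ hbar ξ : ℝ) (C : ℂ) (x : ℝ) : ℂ :=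
  C * (((1 - τ * x + τ ^ 2 * x ^ 2 : ℝ) ^ (-(1 / 2) : ℝ) : ℝ) : ℂ) *
    Complex.exp (Complex.I * ((2 * ξ / (τ * hbar * Real.sqrt 3) : ℝ) : ℂ) *
      ((Real.arctan ((2 * τ * x - 1) / Real.sqrt 3) + Real.pi / 6 : ℝ) : ℂ))

lemma w_pos (τ y : ℝ) : 0 < 1 - τ * y + τ ^ 2 * y ^ 2 := by
  nlinarith [sq_nonneg (2 * (τ * y) - 1)]

lemma alg_aux (C E sw hb xi : ℂ) (hsw : sw ≠ 0) (hb0 : hb ≠ 0) :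
    -Complex.I * hb * sw * (C * E * (Complex.I * (xi / (hb * sw ^ 2)))) = xi * (C * sw⁻¹ * E) := by
  field_simp
  linear_combination (-(C * E * xi)) * Complex.I_sq

lemma pPhi (τ hbar ξ : ℝ) (hτ : 0 < τ) (hhbar : 0 < hbar) (C : ℂ) (x : ℝ) :
    hermitianDeformedMomentum τ hbar (deformedPlaneWave τ hbar ξ C) x
      = (ξ : ℂ) * deformedPlaneWave τ hbar ξ C x := by
  have hw : (0:ℝ) < 1 - τ * x + τ ^ 2 * x ^ 2 := w_pos τ x
  have h3 : (0:ℝ) < Real.sqrt 3 := Real.sqrt_pos.mpr (by norm_num)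
  have h3' : Real.sqrt 3 ^ 2 = 3 := Real.sq_sqrt (by norm_num)
  set k : ℝ := 2 * ξ / (τ * hbar * Real.sqrt 3) with hk
  set g : ℝ → ℂ := fun y => C * Complex.exp (Complex.I * (k : ℂ) *
      ((Real.arctan ((2 * τ * y - 1) / Real.sqrt 3) + Real.pi / 6 : ℝ) : ℂ)) with hg
  have hfg : (fun y => (Real.sqrt (1 - τ * y + τ ^ 2 * y ^ 2) : ℂ)
      * deformedPlaneWave τ hbar ξ C y) = g := by
    funext y
    have hwy := w_pos τ y
    have key : ((Real.sqrt (1 - τ * y + τ ^ 2 * y ^ 2) : ℝ) : ℂ)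
        * (((1 - τ * y + τ ^ 2 * y ^ 2) ^ (-(1 / 2) : ℝ) : ℝ) : ℂ) = 1 := by
      rw [← Complex.ofReal_mul]
      norm_cast
      rw [Real.sqrt_eq_rpow, ← Real.rpow_add hwy]
      norm_num
    simp only [deformedPlaneWave, hg, ← hk]
    calc (Real.sqrt (1 - τ * y + τ ^ 2 * y ^ 2) : ℂ)
          * (C * (((1 - τ * y + τ ^ 2 * y ^ 2) ^ (-(1 / 2) : ℝ) : ℝ) : ℂ)
            * Complex.exp (Complex.I * (k : ℂ) *
              ((Real.arctan ((2 * τ * y - 1) / Real.sqrt 3) + Real.pi / 6 : ℝ) : ℂ)))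
        = ((Real.sqrt (1 - τ * y + τ ^ 2 * y ^ 2) : ℂ)
            * (((1 - τ * y + τ ^ 2 * y ^ 2) ^ (-(1 / 2) : ℝ) : ℝ) : ℂ))
          * (C * Complex.exp (Complex.I * (k : ℂ) *
              ((Real.arctan ((2 * τ * y - 1) / Real.sqrt 3) + Real.pi / 6 : ℝ) : ℂ))) := by ring
      _ = _ := by rw [key, one_mul]
  have hu : HasDerivAt (fun y : ℝ => (2 * τ * y - 1) / Real.sqrt 3)
      (2 * τ / Real.sqrt 3) x := by
    simpa using (((hasDerivAt_id x).const_mul (2 * τ)).sub_const 1).div_const (Real.sqrt 3)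
  have harc : HasDerivAt (fun y : ℝ => Real.arctan ((2 * τ * y - 1) / Real.sqrt 3)
        + Real.pi / 6)
      (1 / (1 + ((2 * τ * x - 1) / Real.sqrt 3) ^ 2) * (2 * τ / Real.sqrt 3)) x :=
    hu.arctan.add_const _
  -- simplify the derivative of the phase
  have hden : (0:ℝ) < 1 + ((2 * τ * x - 1) / Real.sqrt 3) ^ 2 := by positivity
  have hphase : 1 / (1 + ((2 * τ * x - 1) / Real.sqrt 3) ^ 2) * (2 * τ / Real.sqrt 3)
      = τ * Real.sqrt 3 / (2 * (1 - τ * x + τ ^ 2 * x ^ 2)) := by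
    have h9 : 1 + ((2 * τ * x - 1) / Real.sqrt 3) ^ 2
        = 4 * (1 - τ * x + τ ^ 2 * x ^ 2) / 3 := by
      rw [div_pow, h3']; ring
    rw [h9]
    field_simp
    linear_combination (-4) * h3'
  have hcoef : k * (τ * Real.sqrt 3 / (2 * (1 - τ * x + τ ^ 2 * x ^ 2)))
      = ξ / (hbar * (1 - τ * x + τ ^ 2 * x ^ 2)) := by
    rw [hk]
    field_simp
  have hgd : HasDerivAt g (g x * (Complex.I *
      ((ξ / (hbar * (1 - τ * x + τ ^ 2 * x ^ 2)) : ℝ) : ℂ))) x := by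
    have H := (((harc.ofReal_comp).const_mul (Complex.I * (k : ℂ))).cexp).const_mul C
    have hval : C * (Complex.exp (Complex.I * (k : ℂ) *
          ((Real.arctan ((2 * τ * x - 1) / Real.sqrt 3) + Real.pi / 6 : ℝ) : ℂ))
        * (Complex.I * (k : ℂ) *
          ((1 / (1 + ((2 * τ * x - 1) / Real.sqrt 3) ^ 2) * (2 * τ / Real.sqrt 3) : ℝ) : ℂ)))
        = g x * (Complex.I * ((ξ / (hbar * (1 - τ * x + τ ^ 2 * x ^ 2)) : ℝ) : ℂ)) := by
      rw [hphase, hg]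
      rw [show Complex.I * (k : ℂ)
          * ((τ * Real.sqrt 3 / (2 * (1 - τ * x + τ ^ 2 * x ^ 2)) : ℝ) : ℂ)
          = Complex.I * ((k * (τ * Real.sqrt 3 / (2 * (1 - τ * x + τ ^ 2 * x ^ 2))) : ℝ) : ℂ) by
        push_cast; ring, hcoef]
      ring
    rw [← hval]
    convert H using 1
  have hderiv : deriv (fun y => (Real.sqrt (1 - τ * y + τ ^ 2 * y ^ 2) : ℂ)
      * deformedPlaneWave τ hbar ξ C y) x = g x * (Complex.I *
      ((ξ / (hbar * (1 - τ * x + τ ^ 2 * x ^ 2)) : ℝ) : ℂ)) := by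
    rw [hfg]; exact hgd.deriv
  rw [hermitianDeformedMomentum, hderiv]
  have hsw : ((Real.sqrt (1 - τ * x + τ ^ 2 * x ^ 2) : ℝ) : ℂ) ^ 2
      = ((1 - τ * x + τ ^ 2 * x ^ 2 : ℝ) : ℂ) := by
    norm_cast; exact Real.sq_sqrt hw.le
  have hswne : ((Real.sqrt (1 - τ * x + τ ^ 2 * x ^ 2) : ℝ) : ℂ) ≠ 0 := by
    norm_cast; exact (Real.sqrt_pos.mpr hw).ne'
  have hhne : (hbar : ℂ) ≠ 0 := by exact_mod_cast hhbar.ne'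
  have hinv : (((1 - τ * x + τ ^ 2 * x ^ 2 : ℝ) ^ (-(1 / 2) : ℝ) : ℝ) : ℂ)
      = ((Real.sqrt (1 - τ * x + τ ^ 2 * x ^ 2) : ℝ) : ℂ)⁻¹ := by
    norm_cast
    rw [Real.rpow_neg hw.le, Real.sqrt_eq_rpow]
  have hc : ((ξ / (hbar * (1 - τ * x + τ ^ 2 * x ^ 2)) : ℝ) : ℂ)
      = (ξ : ℂ) / ((hbar : ℂ) * ((Real.sqrt (1 - τ * x + τ ^ 2 * x ^ 2) : ℝ) : ℂ) ^ 2) := by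
    rw [hsw]; push_cast; ring
  simp only [deformedPlaneWave, hg, hinv, hc]
  rw [show ((2 * ξ / (τ * hbar * Real.sqrt 3) : ℝ) : ℂ) = ((k : ℝ) : ℂ) from by rw [hk]]
  exact alg_aux C _ _ _ _ hswne hhne

lemma pSmul (τ hbar : ℝ) (c : ℂ) (f : ℝ → ℂ) (x : ℝ) :
    hermitianDeformedMomentum τ hbar (fun y => c * f y) x
      = c * hermitianDeformedMomentum τ hbar f x := by
  simp only [hermitianDeformedMomentum]
  rw [show (fun y => (Real.sqrt (1 - τ * y + τ ^ 2 * y ^ 2) : ℂ) * (c * f y))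
      = fun y => c * ((Real.sqrt (1 - τ * y + τ ^ 2 * y ^ 2) : ℂ) * f y) from
    funext fun y => by ring, deriv_const_mul_field]
  ring

theorem deformed_plane_wave_energy_eigenfunction (τ hbar ξ : ℝ) (hτ : 0 < τ)
    (hhbar : 0 < hbar) (C : ℂ) :
    (∀ x : ℝ,
      hermitianDeformedMomentum τ hbar
          (hermitianDeformedMomentum τ hbar (deformedPlaneWave τ hbar ξ C)) x
        = ((ξ : ℂ) ^ 2) * deformedPlaneWave τ hbar ξ C x) ∧
    (∀ (m : ℝ), m ≠ 0 → ∀ (V : ℝ → ℂ) (x : ℝ),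
      (1 / (2 * (m : ℂ))) * hermitianDeformedMomentum τ hbar
          (hermitianDeformedMomentum τ hbar (deformedPlaneWave τ hbar ξ C)) x
        + V x * deformedPlaneWave τ hbar ξ C x
      = ((ξ : ℂ) ^ 2 / (2 * (m : ℂ)) + V x) * deformedPlaneWave τ hbar ξ C x) := by
  have key : ∀ x : ℝ,
      hermitianDeformedMomentum τ hbar
          (hermitianDeformedMomentum τ hbar (deformedPlaneWave τ hbar ξ C)) x
        = ((ξ : ℂ) ^ 2) * deformedPlaneWave τ hbar ξ C x := by
    intro x
    rw [show hermitianDeformedMomentum τ hbar (deformedPlaneWave τ hbar ξ C)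
        = fun y => (ξ : ℂ) * deformedPlaneWave τ hbar ξ C y from
      funext fun y => pPhi τ hbar ξ hτ hhbar C y]
    rw [pSmul, pPhi τ hbar ξ hτ hhbar C x]
    ring
  refine ⟨key, fun m hm V x => ?_⟩
  rw [key x]
  ring
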